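/- Let 𝕂 be a field equipped with a non-Archimedean absolute value such that either char 𝕂 = p > 0, or ‖(n : 𝕂)‖ = 1 for every positive integer n (i.e. the residue field of 𝕂 has characteristic 0). Then for every topological group G, every continuous quasimorphism f : G → 𝕂 is trivial: there exist a continuous homomorphism h : G → (𝕂,+) and a constant C ≥ 0 such that ‖f(g) − h(g)‖ ≤ C for all g ∈ G. -/

import Mathlib

open IsUltrametricDist

/-- Auxiliary: over a field `F` acting on `𝕂` by norm-nonincreasing scalars, the closed ball
of radius `D` is a submodule, and we can project away from it additively. -/
lemma exists_proj_aux (F : Type) [Field F] (𝕂 : Type*) [NormedField 𝕂]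
    [IsUltrametricDist 𝕂] [Module F 𝕂]
    (hs : ∀ (c : F) (x : 𝕂), ‖c • x‖ ≤ ‖x‖) (D : ℝ) (hD : 0 ≤ D) :
    ∃ π : 𝕂 → 𝕂, (∀ x y : 𝕂, π (x + y) = π x + π y) ∧
      (∀ x : 𝕂, ‖x‖ ≤ D → π x = 0) ∧ (∀ x : 𝕂, ‖x - π x‖ ≤ D) := by
  set O : Submodule F 𝕂 :=
    { carrier := {x | ‖x‖ ≤ D}
      add_mem' := fun {a b} ha hb => le_trans (norm_add_le_max a b) (max_le ha hb)
      zero_mem' := by simpa using hD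
      smul_mem' := fun c x hx => le_trans (hs c x) hx } with hO
  obtain ⟨q, hq⟩ := O.exists_isCompl
  let pr : 𝕂 →ₗ[F] O := O.linearProjOfIsCompl q hq
  refine ⟨fun x => x - (pr x : 𝕂), fun x y => by simp [map_add]; ring, ?_, ?_⟩
  · intro x hx
    have : pr x = ⟨x, hx⟩ := Submodule.linearProjOfIsCompl_apply_left hq ⟨x, hx⟩
    simp [this]
  · intro x
    have h2 : ‖(pr x : 𝕂)‖ ≤ D := (pr x).2
    simpa using h2

theorem quasimorphism_trivial_of_equal_char
    (𝕂 : Type*) [NormedField 𝕂] [IsUltrametricDist 𝕂]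
    (hchar : (∃ p : ℕ, 0 < p ∧ CharP 𝕂 p) ∨ (∀ n : ℕ, 0 < n → ‖(n : 𝕂)‖ = 1))
    (G : Type*) [Group G] [TopologicalSpace G] [IsTopologicalGroup G]
    (f : G → 𝕂) (hf : Continuous f)
    (D : ℝ) (hD : ∀ x y : G, ‖f (x * y) - f x - f y‖ ≤ D) :
    ∃ h : G → 𝕂, Continuous h ∧ (∀ x y : G, h (x * y) = h x + h y) ∧
      ∃ C : ℝ, ∀ g : G, ‖f g - h g‖ ≤ C := by
  have hD0 : 0 ≤ D := le_trans (norm_nonneg _) (hD 1 1)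
  -- degenerate case : `f` is itself a homomorphism
  rcases eq_or_lt_of_le hD0 with hD0' | hDpos
  · refine ⟨f, hf, fun x y => ?_, 0, fun g => by simp⟩
    have := hD x y
    rw [← hD0'] at this
    have h0 : f (x * y) - f x - f y = 0 := norm_le_zero_iff.mp this
    linear_combination h0
  · -- main case : `D > 0`
    have hπ : ∃ π : 𝕂 → 𝕂, (∀ x y : 𝕂, π (x + y) = π x + π y) ∧
        (∀ x : 𝕂, ‖x‖ ≤ D → π x = 0) ∧ (∀ x : 𝕂, ‖x - π x‖ ≤ D) := by
      rcases hchar with ⟨p, hp, hcp⟩ | hres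
      · haveI := hcp
        haveI : NeZero p := ⟨hp.ne'⟩
        haveI : Fact p.Prime := CharP.char_is_prime_of_pos 𝕂 p
        letI : Algebra (ZMod p) 𝕂 := ZMod.algebra 𝕂 p
        refine exists_proj_aux (ZMod p) 𝕂 (fun c x => ?_) D hD0
        have hc : c • x = ((c.val : ℕ) : 𝕂) * x := by
          show (ZMod.cast c : 𝕂) * x = _
          rw [ZMod.natCast_val c]
        rw [hc]
        calc ‖((c.val : ℕ) : 𝕂) * x‖ = ‖((c.val : ℕ) : 𝕂)‖ * ‖x‖ := norm_mul _ _
          _ ≤ 1 * ‖x‖ := by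
              exact mul_le_mul_of_nonneg_right (norm_natCast_le_one 𝕂 _) (norm_nonneg _)
          _ = ‖x‖ := one_mul _
      · haveI : CharZero 𝕂 := by
          refine ⟨fun a b hab => ?_⟩
          by_contra hne
          rcases Nat.lt_or_ge a b with hlt | hge
          · have : ((b - a : ℕ) : 𝕂) = 0 := by
              push_cast [Nat.cast_sub hlt.le] at hab ⊢; rw [hab]; ring
            have := hres (b - a) (by omega)
            rw [‹((b - a : ℕ) : 𝕂) = 0›] at this; simp at this
          · have hlt : b < a := lt_of_le_of_ne hge (fun h => hne h.symm)
            have : ((a - b : ℕ) : 𝕂) = 0 := by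
              push_cast [Nat.cast_sub hlt.le] at hab ⊢; rw [hab]; ring
            have := hres (a - b) (by omega)
            rw [‹((a - b : ℕ) : 𝕂) = 0›] at this; simp at this
        refine exists_proj_aux ℚ 𝕂 (fun c x => ?_) D hD0
        rw [Rat.smul_def, norm_mul]
        have hc : ‖(c : 𝕂)‖ ≤ 1 := by
          rw [Rat.cast_def, norm_div]
          have h1 : ‖((c.num : ℤ) : 𝕂)‖ ≤ 1 := norm_intCast_le_one 𝕂 _
          have h2 : ‖((c.den : ℕ) : 𝕂)‖ = 1 := hres c.den c.pos
          rw [h2, div_one]; exact h1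
        calc ‖(c : 𝕂)‖ * ‖x‖ ≤ 1 * ‖x‖ :=
              mul_le_mul_of_nonneg_right hc (norm_nonneg _)
          _ = ‖x‖ := one_mul _
    obtain ⟨π, hadd, hzero, hclose⟩ := hπ
    set h : G → 𝕂 := fun g => π (f g) with hh
    have hhom : ∀ x y : G, h (x * y) = h x + h y := by
      intro x y
      have e1 : f (x * y) = (f x + f y) + (f (x * y) - f x - f y) := by ring
      rw [hh]
      simp only
      rw [e1, hadd, hadd, hzero _ (hD x y), add_zero]
    have hbd : ∀ g : G, ‖f g - h g‖ ≤ D := fun g => hclose (f g)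
    -- continuity : `h` is locally constant
    have hcont : Continuous h := by
      rw [continuous_iff_continuousAt]
      intro x0
      have hf1 : ‖f 1‖ ≤ D := by simpa using hD 1 1
      have hev : ∀ᶠ y in nhds x0, h y = h x0 := by
        have hcf : ContinuousAt (fun y => f (y * x0⁻¹)) x0 :=
          (hf.comp (continuous_mul_right x0⁻¹)).continuousAt
        have hsmall : ∀ᶠ y in nhds x0, ‖f (y * x0⁻¹)‖ ≤ D := by
          have hx0 : f (x0 * x0⁻¹) = f 1 := by rw [mul_inv_cancel]
          have hball : ∀ᶠ y in nhds x0, ‖f (y * x0⁻¹) - f 1‖ < D := by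
            have : ContinuousAt (fun y => ‖f (y * x0⁻¹) - f 1‖) x0 :=
              ((hcf.sub continuousAt_const).norm)
            have h0 : ‖f (x0 * x0⁻¹) - f 1‖ < D := by
              rw [hx0]; simpa using hDpos
            exact this.eventually_lt continuousAt_const h0
          filter_upwards [hball] with y hy
          calc ‖f (y * x0⁻¹)‖ = ‖(f (y * x0⁻¹) - f 1) + f 1‖ := by ring_nf
            _ ≤ max ‖f (y * x0⁻¹) - f 1‖ ‖f 1‖ := norm_add_le_max _ _
            _ ≤ D := max_le hy.le hf1
        filter_upwards [hsmall] with y hy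
        have e : h y = h (y * x0⁻¹) + h x0 := by
          have := hhom (y * x0⁻¹) x0
          rw [inv_mul_cancel_right] at this
          exact this
        rw [e, hh]
        simp only
        rw [hzero _ hy, zero_add]
      exact continuousAt_const.congr (hev.mono fun y hy => hy.symm)
    exact ⟨h, hcont, hhom, D, hbd⟩
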